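/- Key identity behind the main theorem: let P_N be orthogonal projection of ℝ^n onto an (n−k)-dimensional subspace N. Then vol_{n−k}(Z(P_N(2e₁),…,P_N(2eₙ))) = Σ_{S ⊆ {1,…,n}, |S| = n−k} vol_{n−k}(Z(P_N(2eᵢ) : i ∈ S)), where vol_{n−k} is (n−k)-dimensional Hausdorff measure on N. -/

import Mathlib

open MeasureTheory Finset

def zonotope {n m : ℕ} (v : Fin m → EuclideanSpace ℝ (Fin n)) :
    Set (EuclideanSpace ℝ (Fin n)) :=
  {x | ∃ l : Fin m → ℝ, (∀ i, l i ∈ Set.Icc (0 : ℝ) 1) ∧ x = ∑ i, l i • v i}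

/-- The zonotope generated by the vectors `v i` for `i ∈ S`. -/
def zonotopeOn {n : ℕ} (S : Finset (Fin n)) (v : Fin n → EuclideanSpace ℝ (Fin n)) :
    Set (EuclideanSpace ℝ (Fin n)) :=
  {x | ∃ l : Fin n → ℝ, (∀ i, l i ∈ Set.Icc (0 : ℝ) 1) ∧ x = ∑ i ∈ S, l i • v i}

open Module
open scoped Pointwise

noncomputable section
namespace ZProof




variable {ι : Type*} {F G : Type*}

/-- Zonotope over a finset of generators, as a Minkowski sum of segments. -/
def zSum [AddCommGroup F] [Module ℝ F] (S : Finset ι) (v : ι → F) : Set F :=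
  ∑ i ∈ S, segment ℝ 0 (v i)

variable [AddCommGroup F] [Module ℝ F] [AddCommGroup G] [Module ℝ G]

lemma mem_segment_zero_iff {u x : F} :
    x ∈ segment ℝ 0 u ↔ ∃ t ∈ Set.Icc (0:ℝ) 1, x = t • u := by
  rw [segment_eq_image]
  constructor
  · rintro ⟨t, ht, rfl⟩; exact ⟨t, ht, by simp⟩
  · rintro ⟨t, ht, rfl⟩; exact ⟨t, ht, by simp⟩

lemma zero_mem_zSum (S : Finset ι) (v : ι → F) : (0:F) ∈ zSum S v := by
  classical
  rw [zSum, Set.mem_finset_sum]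
  exact ⟨fun _ => 0, fun _ => left_mem_segment ℝ 0 _, by simp⟩

lemma zSum_eq (S : Finset ι) (v : ι → F) :
    zSum S v = {x | ∃ l : ι → ℝ, (∀ i, l i ∈ Set.Icc (0:ℝ) 1) ∧ x = ∑ i ∈ S, l i • v i} := by
  classical
  ext x
  rw [zSum, Set.mem_finset_sum]
  constructor
  · rintro ⟨g, hg, rfl⟩
    have h : ∀ i : ι, ∃ t : ℝ, t ∈ Set.Icc (0:ℝ) 1 ∧ (i ∈ S → g i = t • v i) := by
      intro i
      by_cases hi : i ∈ S
      · obtain ⟨t, ht, hx⟩ := mem_segment_zero_iff.1 (hg hi)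
        exact ⟨t, ht, fun _ => hx⟩
      · exact ⟨0, ⟨le_refl _, zero_le_one⟩, fun h => absurd h hi⟩
    choose l hl1 hl2 using h
    exact ⟨l, hl1, Finset.sum_congr rfl fun i hi => hl2 i hi⟩
  · rintro ⟨l, hl, rfl⟩
    exact ⟨fun i => l i • v i, fun {i} _ => mem_segment_zero_iff.2 ⟨l i, hl i, rfl⟩, rfl⟩

lemma zSum_image (f : F →ₗ[ℝ] G) (S : Finset ι) (v : ι → F) :
    f '' zSum S v = zSum S (f ∘ v) := by
  rw [zSum, zSum, Set.image_finset_sum]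
  refine Finset.sum_congr rfl fun i _ => ?_
  have := image_segment ℝ f.toAffineMap 0 (v i)
  simpa [LinearMap.coe_toAffineMap, map_zero] using this

lemma zSum_insert [DecidableEq ι] {a : ι} {S : Finset ι} (ha : a ∉ S) (v : ι → F) :
    zSum (insert a S) v = zSum S v + segment ℝ 0 (v a) := by
  rw [zSum, Finset.sum_insert ha, add_comm]; rfl

lemma zSum_subset_span (S : Finset ι) (v : ι → F) :
    zSum S v ⊆ (Submodule.span ℝ (v '' ↑S) : Set F) := by
  classical
  intro x hx
  rw [zSum_eq] at hx
  obtain ⟨l, -, rfl⟩ := hx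
  refine Submodule.sum_mem _ fun i hi => Submodule.smul_mem _ _ ?_
  exact Submodule.subset_span ⟨i, hi, rfl⟩



variable {ι : Type*} {F G : Type*}
variable [NormedAddCommGroup F] [NormedSpace ℝ F] [NormedAddCommGroup G] [NormedSpace ℝ G]

lemma isCompact_segment' (x y : F) : IsCompact (segment ℝ x y) := by
  rw [segment_eq_image]
  exact (isCompact_Icc).image (by continuity)

lemma zSum_isCompact (S : Finset ι) (v : ι → F) : IsCompact (zSum S v) := by
  classical
  induction S using Finset.induction_on with
  | empty => rw [zSum, Finset.sum_empty]; exact isCompact_singleton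
  | insert _ _ ha ih =>
    rw [zSum_insert ha]
    exact ih.add (isCompact_segment' _ _)

lemma zSum_convex (S : Finset ι) (v : ι → F) : Convex ℝ (zSum S v) := by
  classical
  induction S using Finset.induction_on with
  | empty => rw [zSum, Finset.sum_empty]; exact convex_singleton (0:F)
  | insert _ _ ha ih =>
    rw [zSum_insert ha]
    exact ih.add (convex_segment _ _)





lemma Icc_add_Icc_zero {a b c : ℝ} (hab : a ≤ b) (hc : 0 ≤ c) :
    Set.Icc a b + Set.Icc 0 c = Set.Icc a (b + c) := by
  apply subset_antisymm
  · rintro x ⟨p, hp, q, hq, rfl⟩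
    simp only [Set.mem_Icc] at *
    constructor <;> linarith
  · intro x hx
    by_cases hxb : x ≤ b
    · exact ⟨x, ⟨hx.1, hxb⟩, 0, ⟨le_refl _, hc⟩, add_zero x⟩
    · exact ⟨b, ⟨hab, le_refl _⟩, x - b, ⟨by linarith, by linarith [hx.2]⟩, by ring⟩

lemma cavProd {D : ℕ} (C : Set (ℝ × (Fin D → ℝ))) (hC : Convex ℝ C) (hK : IsCompact C)
    {c : ℝ} (hc : 0 ≤ c) :
    volume (C + Set.Icc (0:ℝ) c ×ˢ ({0} : Set (Fin D → ℝ)))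
      = volume C + ENNReal.ofReal c * volume (Prod.snd '' C) := by
  set Q : Set (ℝ × (Fin D → ℝ)) := Set.Icc (0:ℝ) c ×ˢ ({0} : Set (Fin D → ℝ)) with hQ
  have hQK : IsCompact Q := isCompact_Icc.prod isCompact_singleton
  have hCQ : IsCompact (C + Q) := hK.add hQK
  have hCm : MeasurableSet C := hK.isClosed.measurableSet
  have hCQm : MeasurableSet (C + Q) := hCQ.isClosed.measurableSet
  have hprojK : IsCompact (Prod.snd '' C) := hK.image continuous_snd
  have hprojm : MeasurableSet (Prod.snd '' C) := hprojK.isClosed.measurableSet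
  have key : ∀ y : Fin D → ℝ,
      volume {t : ℝ | (t, y) ∈ C + Q}
        = volume {t : ℝ | (t, y) ∈ C}
            + (Prod.snd '' C).indicator (fun _ => ENNReal.ofReal c) y := by
    intro y
    by_cases hy : y ∈ Prod.snd '' C
    · set s : Set ℝ := {t : ℝ | (t, y) ∈ C} with hs
      have hsne : s.Nonempty := by
        obtain ⟨⟨t, y'⟩, htC, hty⟩ := hy
        exact ⟨t, by simp only [hs, Set.mem_setOf_eq]; rwa [← hty]⟩
      have hcont : Continuous fun t : ℝ => (t, y) := by continuity
      have hsconv : Convex ℝ s := by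
        have heq : s = (AffineMap.lineMap ((0:ℝ), y) ((1:ℝ), y)) ⁻¹' C := by
          ext t
          simp [hs, AffineMap.lineMap_apply, Prod.ext_iff]
        rw [heq]
        exact hC.affine_preimage _
      have hscomp : IsCompact s := by
        refine (hK.image continuous_fst).of_isClosed_subset
          (hK.isClosed.preimage hcont) ?_
        intro t ht
        exact ⟨(t, y), ht, rfl⟩
      have hIcc := eq_Icc_of_connected_compact ⟨hsne, hsconv.isPreconnected⟩ hscomp
      have hab : sInf s ≤ sSup s := by
        have := hIcc ▸ hsne
        exact Set.nonempty_Icc.1 this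
      have hslice : {t : ℝ | (t, y) ∈ C + Q} = s + Set.Icc 0 c := by
        ext t
        constructor
        · rintro ⟨⟨p1, p2⟩, hp, ⟨q1, q2⟩, hq, heq⟩
          obtain ⟨hq1, hq2⟩ := hq
          simp only [Set.mem_singleton_iff] at hq2
          have he1 : p1 + q1 = t := by simpa using congrArg Prod.fst heq
          have he2 : p2 + q2 = y := by simpa using congrArg Prod.snd heq
          refine ⟨p1, ?_, q1, hq1, he1⟩
          simp only [hs, Set.mem_setOf_eq]
          have : p2 = y := by rw [hq2, add_zero] at he2; exact he2
          rwa [← this]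
        · rintro ⟨p, hp, q, hq, rfl⟩
          exact ⟨(p, y), hp, (q, 0), ⟨hq, rfl⟩, by simp⟩
      rw [hslice, hIcc, Icc_add_Icc_zero hab hc, Set.indicator_of_mem hy,
        Real.volume_Icc, Real.volume_Icc,
        show sSup s + c - sInf s = (sSup s - sInf s) + c by ring,
        ENNReal.ofReal_add (by linarith) hc]
    · have h1 : {t : ℝ | (t, y) ∈ C} = ∅ := by
        ext t
        simp only [Set.mem_setOf_eq, Set.mem_empty_iff_false, iff_false]
        exact fun h => hy ⟨(t, y), h, rfl⟩
      have h2 : {t : ℝ | (t, y) ∈ C + Q} = ∅ := by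
        ext t
        simp only [Set.mem_setOf_eq, Set.mem_empty_iff_false, iff_false]
        rintro ⟨⟨p1, p2⟩, hp, ⟨q1, q2⟩, hq, heq⟩
        obtain ⟨hq1, hq2⟩ := hq
        simp only [Set.mem_singleton_iff] at hq2
        have he2 : p2 + q2 = y := by simpa using congrArg Prod.snd heq
        apply hy
        refine ⟨(p1, p2), hp, ?_⟩
        rw [hq2, add_zero] at he2
        exact he2
      rw [h1, h2, Set.indicator_of_notMem hy]
      simp
  rw [Measure.volume_eq_prod, Measure.prod_apply_symm hCQm, Measure.prod_apply_symm hCm]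
  calc
    ∫⁻ y, volume ((fun x => (x, y)) ⁻¹' (C + Q))
        = ∫⁻ y, (volume ((fun x => (x, y)) ⁻¹' C)
            + (Prod.snd '' C).indicator (fun _ => ENNReal.ofReal c) y) := by
          exact lintegral_congr key
    _ = (∫⁻ y, volume ((fun x => (x, y)) ⁻¹' C))
          + ∫⁻ y, (Prod.snd '' C).indicator (fun _ => ENNReal.ofReal c) y := by
          rw [lintegral_add_right _ (measurable_const.indicator hprojm)]
    _ = (∫⁻ y, volume ((fun x => (x, y)) ⁻¹' C)) + ENNReal.ofReal c * volume (Prod.snd '' C) := by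
          rw [lintegral_indicator_const hprojm]





def projL (D : ℕ) : EuclideanSpace ℝ (Fin (D+1)) →ₗ[ℝ] EuclideanSpace ℝ (Fin D) where
  toFun x := WithLp.toLp 2 (fun j : Fin D => x j.castSucc)
  map_add' _ _ := rfl
  map_smul' _ _ := rfl

def splitL (D : ℕ) : EuclideanSpace ℝ (Fin (D+1)) →ₗ[ℝ] ℝ × (Fin D → ℝ) where
  toFun x := (x (Fin.last D), fun j => x j.castSucc)
  map_add' _ _ := rfl
  map_smul' _ _ := rfl

def splitE (D : ℕ) : EuclideanSpace ℝ (Fin (D+1)) ≃ᵐ ℝ × (Fin D → ℝ) :=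
  (MeasurableEquiv.toLp 2 (Fin (D+1) → ℝ)).symm.trans
    (MeasurableEquiv.piFinSuccAbove (fun _ : Fin (D+1) => ℝ) (Fin.last D))

lemma splitE_coe (D : ℕ) : ⇑(splitE D) = ⇑(splitL D) := by
  funext x
  simp only [splitE, splitL, MeasurableEquiv.trans_apply, MeasurableEquiv.piFinSuccAbove,
    MeasurableEquiv.coe_mk, Equiv.symm_symm,
    Fin.insertNthEquiv, Equiv.coe_fn_symm_mk, LinearMap.coe_mk, AddHom.coe_mk]
  refine Prod.ext rfl ?_
  funext j
  show x ((Fin.last D).succAbove j) = x j.castSucc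
  rw [Fin.succAbove_last]

lemma splitE_mp (D : ℕ) : MeasurePreserving (splitE D) volume volume :=
  (volume_preserving_piFinSuccAbove (fun _ : Fin (D+1) => ℝ) (Fin.last D)).comp
    (EuclideanSpace.volume_preserving_symm_measurableEquiv_toLp (Fin (D+1)))

lemma vol_image_splitL {D : ℕ} {s : Set (EuclideanSpace ℝ (Fin (D+1)))}
    (hm : MeasurableSet (⇑(splitL D) '' s)) :
    volume (⇑(splitL D) '' s) = volume s := by
  rw [← splitE_coe] at hm ⊢
  rw [← (splitE_mp D).measure_preimage hm.nullMeasurableSet]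
  congr 1
  exact (splitE D).toEquiv.injective.preimage_image s

lemma vol_image_eucEquiv {D : ℕ} {s : Set (EuclideanSpace ℝ (Fin D))}
    (hm : MeasurableSet (⇑(MeasurableEquiv.toLp 2 (Fin D → ℝ)).symm '' s)) :
    volume (⇑(MeasurableEquiv.toLp 2 (Fin D → ℝ)).symm '' s) = volume s := by
  rw [← (EuclideanSpace.volume_preserving_symm_measurableEquiv_toLp (Fin D)).measure_preimage
    hm.nullMeasurableSet]
  congr 1
  exact (MeasurableEquiv.toLp 2 (Fin D → ℝ)).symm.toEquiv.injective.preimage_image s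

lemma snd_comp_splitL (D : ℕ) :
    Prod.snd ∘ ⇑(splitL D) = ⇑(MeasurableEquiv.toLp 2 (Fin D → ℝ)).symm ∘ ⇑(projL D) := rfl

lemma splitL_single (D : ℕ) (c : ℝ) :
    (splitL D) (c • EuclideanSpace.single (Fin.last D) (1:ℝ)) = ((c : ℝ), (0 : Fin D → ℝ)) := by
  apply Prod.ext
  · show (c • EuclideanSpace.single (Fin.last D) (1:ℝ)) (Fin.last D) = c
    simp [EuclideanSpace.single_apply]
  · show (fun j : Fin D => (c • EuclideanSpace.single (Fin.last D) (1:ℝ)) j.castSucc) = 0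
    funext j
    have : (j.castSucc : Fin (D+1)) ≠ Fin.last D := (Fin.castSucc_lt_last j).ne
    simp [EuclideanSpace.single_apply, this]

lemma segment_prod_eq {D : ℕ} {c : ℝ} (hc : 0 ≤ c) :
    segment ℝ (0 : ℝ × (Fin D → ℝ)) (c, 0)
      = Set.Icc (0:ℝ) c ×ˢ ({0} : Set (Fin D → ℝ)) := by
  ext ⟨p, q⟩
  rw [mem_segment_zero_iff]
  constructor
  · rintro ⟨t, ht, heq⟩
    have hp : p = t * c := by simpa using congrArg Prod.fst heq
    have hq : q = 0 := by simpa using congrArg Prod.snd heq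
    refine ⟨?_, by simpa using hq⟩
    rw [hp]
    exact ⟨mul_nonneg ht.1 hc, mul_le_of_le_one_left hc ht.2⟩
  · rintro ⟨hp, hq⟩
    simp only [Set.mem_singleton_iff] at hq
    by_cases h0 : c = 0
    · refine ⟨0, ⟨le_refl _, zero_le_one⟩, ?_⟩
      have : p = 0 := le_antisymm (h0 ▸ hp.2) hp.1
      simp [this, hq]
    · have hcpos : 0 < c := lt_of_le_of_ne hc (Ne.symm h0)
      refine ⟨p / c, ⟨div_nonneg hp.1 hc, (div_le_one hcpos).2 hp.2⟩, ?_⟩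
      apply Prod.ext
      · show p = p / c * c
        field_simp
      · show q = (p / c) • (0 : Fin D → ℝ)
        simp [hq]



lemma cav {D : ℕ} {A : Set (EuclideanSpace ℝ (Fin (D+1)))} (hA : Convex ℝ A)
    (hK : IsCompact A) {c : ℝ} (hc : 0 ≤ c) :
    volume (A + segment ℝ 0 (c • EuclideanSpace.single (Fin.last D) (1:ℝ)))
      = volume A + ENNReal.ofReal c * volume (⇑(projL D) '' A) := by
  set u : EuclideanSpace ℝ (Fin (D+1)) := c • EuclideanSpace.single (Fin.last D) (1:ℝ) with hu
  have hLc : Continuous (splitL D) := (splitL D).continuous_of_finiteDimensional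
  have hPc : Continuous (projL D) := (projL D).continuous_of_finiteDimensional
  have hseg : IsCompact (segment ℝ (0 : EuclideanSpace ℝ (Fin (D+1))) u) := isCompact_segment' _ _
  set B := ⇑(splitL D) '' A with hB
  have hBK : IsCompact B := hK.image hLc
  have hBconv : Convex ℝ B := hA.linear_image _
  have hsegim : ⇑(splitL D) '' segment ℝ 0 u
      = Set.Icc (0:ℝ) c ×ˢ ({0} : Set (Fin D → ℝ)) := by
    have h1 := image_segment ℝ (splitL D).toAffineMap 0 u
    have h2 : (splitL D) 0 = (0 : ℝ × (Fin D → ℝ)) := map_zero _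
    have h3 : (splitL D) u = ((c : ℝ), (0 : Fin D → ℝ)) := splitL_single D c
    rw [LinearMap.coe_toAffineMap] at h1
    rw [h1, h2, h3, segment_prod_eq hc]
  have himadd : ⇑(splitL D) '' (A + segment ℝ 0 u)
      = B + Set.Icc (0:ℝ) c ×ˢ ({0} : Set (Fin D → ℝ)) := by
    rw [Set.image_add, hsegim]
  have e1 : volume (A + segment ℝ 0 u) = volume (B + Set.Icc (0:ℝ) c ×ˢ ({0} : Set (Fin D → ℝ))) := by
    rw [← himadd]
    exact (vol_image_splitL (((hK.add hseg).image hLc).isClosed.measurableSet)).symm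
  have e2 : volume B = volume A := vol_image_splitL (hBK.isClosed.measurableSet)
  have e3 : Prod.snd '' B = ⇑(MeasurableEquiv.toLp 2 (Fin D → ℝ)).symm '' (⇑(projL D) '' A) := by
    rw [hB, ← Set.image_comp, snd_comp_splitL, Set.image_comp]
  have e4 : volume (Prod.snd '' B) = volume (⇑(projL D) '' A) := by
    rw [e3]
    exact vol_image_eucEquiv (by
      rw [← e3]
      exact (hBK.image continuous_snd).isClosed.measurableSet)
  rw [e1, cavProd _ hBconv hBK hc, e2, e4]

lemma vol_zSum_zero {D : ℕ} {ι : Type*} (S : Finset ι) (v : ι → EuclideanSpace ℝ (Fin D))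
    (h : S.card < D) : volume (zSum S v) = 0 := by
  classical
  refine measure_mono_null (zSum_subset_span S v) (Measure.addHaar_submodule _ _ ?_)
  intro htop
  have h1 : finrank ℝ (Submodule.span ℝ (v '' ↑S)) ≤ S.card := by
    have he : v '' ↑S = ↑(S.image v) := Finset.coe_image.symm
    rw [he]
    exact (finrank_span_finset_le_card (S.image v)).trans Finset.card_image_le
  rw [htop, finrank_top, finrank_euclideanSpace_fin] at h1
  omega

lemma vol_image_lie {D : ℕ} (g : EuclideanSpace ℝ (Fin D) ≃ₗᵢ[ℝ] EuclideanSpace ℝ (Fin D))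
    {B : Set (EuclideanSpace ℝ (Fin D))} (hB : MeasurableSet B) :
    volume (⇑g '' B) = volume B := by
  have h1 : ⇑g '' B = ⇑g.symm ⁻¹' B := by
    ext x
    constructor
    · rintro ⟨y, hy, rfl⟩; simpa using hy
    · intro hx; exact ⟨g.symm x, hx, by simp⟩
  rw [h1]
  exact (g.symm.measurePreserving).measure_preimage hB.nullMeasurableSet

theorem core (D : ℕ) {ι : Type*} [DecidableEq ι] (F : Finset ι)
    (v : ι → EuclideanSpace ℝ (Fin D)) :
    volume (zSum F v) = ∑ S ∈ F.powersetCard D, volume (zSum S v) := by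
  induction D generalizing ι with
  | zero =>
    rw [Finset.powersetCard_zero, Finset.sum_singleton]
    congr 1
    have hsub : ∀ x y : EuclideanSpace ℝ (Fin 0), x = y := fun x y => by ext i; exact i.elim0
    have key : ∀ S : Finset ι, zSum S v = {0} :=
      fun S => Set.eq_singleton_iff_nonempty_unique_mem.2
        ⟨⟨0, zero_mem_zSum S v⟩, fun x _ => hsub x 0⟩
    rw [key F, key ∅]
  | succ D ih =>
    induction F using Finset.induction_on generalizing v with
    | empty =>
      rw [vol_zSum_zero _ _ (by simp), Finset.powersetCard_eq_empty.2 (by simp),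
        Finset.sum_empty]
    | insert a F' ha ihF =>
      set u := v a with hu
      set c := ‖u‖ with hc
      have hc0 : (0:ℝ) ≤ c := norm_nonneg _
      set wl : EuclideanSpace ℝ (Fin (D+1)) := c • EuclideanSpace.single (Fin.last D) (1:ℝ)
        with hwl
      have hnorm : ‖u‖ = ‖wl‖ := by
        rw [hwl, norm_smul, EuclideanSpace.norm_single]
        simp [hc, abs_of_nonneg hc0]
      set g := Submodule.reflection (ℝ ∙ (u - wl))ᗮ with hgdef
      have hg : g u = wl := Submodule.reflection_sub hnorm
      set vv : ι → EuclideanSpace ℝ (Fin (D+1)) := fun i => g (v i) with hvv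
      have hkey : ∀ S : Finset ι, volume (zSum S vv) = volume (zSum S v) := by
        intro S
        have himg : ⇑g '' zSum S v = zSum S vv := by
          have := zSum_image (g.toLinearEquiv.toLinearMap) S v
          exact this
        rw [← himg]
        exact vol_image_lie g (zSum_isCompact S v).isClosed.measurableSet
      have hva : vv a = c • EuclideanSpace.single (Fin.last D) (1:ℝ) := by
        rw [hvv]; exact hg
      have hdisj : Disjoint (F'.powersetCard (D+1)) ((F'.powersetCard D).image (insert a)) := by
        rw [Finset.disjoint_left]
        intro S hS hS'
        obtain ⟨T, _, rfl⟩ := Finset.mem_image.1 hS'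
        exact ha ((Finset.mem_powersetCard.1 hS).1 (Finset.mem_insert_self a T))
      have hinj : ∀ T ∈ F'.powersetCard D, ∀ T' ∈ F'.powersetCard D,
          insert a T = insert a T' → T = T' := by
        intro T hT T' hT' h
        have haT : a ∉ T := fun hh => ha ((Finset.mem_powersetCard.1 hT).1 hh)
        have haT' : a ∉ T' := fun hh => ha ((Finset.mem_powersetCard.1 hT').1 hh)
        rw [← Finset.erase_insert haT, ← Finset.erase_insert haT', h]
      calc volume (zSum (insert a F') v)
          = volume (zSum (insert a F') vv) := (hkey _).symm
        _ = ∑ S ∈ (insert a F').powersetCard (D+1), volume (zSum S vv) := by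
            rw [zSum_insert ha, hva,
              cav (zSum_convex F' vv) (zSum_isCompact F' vv) hc0,
              zSum_image (projL D), ihF vv, ih F' (⇑(projL D) ∘ vv),
              Finset.powersetCard_succ_insert ha, Finset.sum_union hdisj,
              Finset.sum_image hinj, Finset.mul_sum]
            congr 1
            refine Finset.sum_congr rfl fun T hT => ?_
            obtain ⟨hTF, hTcard⟩ := Finset.mem_powersetCard.1 hT
            have haT : a ∉ T := fun hh => ha (hTF hh)
            rw [zSum_insert haT, hva,
              cav (zSum_convex T vv) (zSum_isCompact T vv) hc0,
              zSum_image (projL D), vol_zSum_zero T vv (by omega), zero_add]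
        _ = ∑ S ∈ (insert a F').powersetCard (D+1), volume (zSum S v) :=
            Finset.sum_congr rfl fun S _ => hkey S


end ZProof
end

open Module in
theorem volume_proj_zonotope_eq_sum {n k : ℕ} (hk : k ≤ n)
    (N : Submodule ℝ (EuclideanSpace ℝ (Fin n)))
    (hN : Module.finrank ℝ N = n - k)
    (P : EuclideanSpace ℝ (Fin n) → EuclideanSpace ℝ (Fin n))
    (hP : P = fun x => (N.orthogonalProjection x : EuclideanSpace ℝ (Fin n))) :
    μH[(n - k : ℕ)]
        (zonotope fun i : Fin n =>
          P ((2 : ℝ) • EuclideanSpace.single i (1 : ℝ))) =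
      ∑ S ∈ Finset.univ.powersetCard (n - k),
        μH[(n - k : ℕ)]
          (zonotopeOn S fun i : Fin n =>
            P ((2 : ℝ) • EuclideanSpace.single i (1 : ℝ))) := by
  classical
  subst hP
  set d := n - k with hd
  set v : Fin n → EuclideanSpace ℝ (Fin n) := fun i =>
    ((N.orthogonalProjection ((2 : ℝ) • EuclideanSpace.single i (1 : ℝ)) :
      N) : EuclideanSpace ℝ (Fin n)) with hv
  let b : OrthonormalBasis (Fin d) ℝ N := (stdOrthonormalBasis ℝ N).reindex (finCongr hN)
  let e : N ≃ₗᵢ[ℝ] EuclideanSpace ℝ (Fin d) := b.repr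
  let Λ : EuclideanSpace ℝ (Fin d) →ₗᵢ[ℝ] EuclideanSpace ℝ (Fin n) :=
    N.subtypeₗᵢ.comp e.symm.toLinearIsometry
  set w : Fin n → EuclideanSpace ℝ (Fin d) := fun i =>
    e (N.orthogonalProjection ((2 : ℝ) • EuclideanSpace.single i (1 : ℝ))) with hw
  have hΛw : ∀ i, Λ (w i) = v i := by
    intro i
    simp [Λ, hw, hv, LinearIsometry.coe_comp, LinearIsometryEquiv.coe_toLinearIsometry]
  have himg : ∀ S : Finset (Fin n), ⇑Λ '' ZProof.zSum S w = ZProof.zSum S v := by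
    intro S
    have h0 : ⇑Λ '' ZProof.zSum S w = ⇑Λ.toLinearMap '' ZProof.zSum S w := rfl
    rw [h0, ZProof.zSum_image Λ.toLinearMap]
    have h1 : ⇑Λ.toLinearMap ∘ w = v := by
      funext i
      simpa using hΛw i
    rw [h1]
  have hμ : ∀ S : Finset (Fin n), μH[(d:ℕ)] (ZProof.zSum S v) = μH[(d:ℕ)] (ZProof.zSum S w) := by
    intro S
    rw [← himg S]
    exact Λ.isometry.hausdorffMeasure_image (Or.inl (by positivity)) _
  have hHaarInst : (μH[(d:ℕ)] : Measure (EuclideanSpace ℝ (Fin d))).IsAddHaarMeasure := by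
    have h := MeasureTheory.isAddHaarMeasure_hausdorffMeasure
      (E := EuclideanSpace ℝ (Fin d))
    rwa [finrank_euclideanSpace_fin] at h
  obtain ⟨cst, hcst⟩ : ∃ cst : NNReal,
      (μH[(d:ℕ)] : Measure (EuclideanSpace ℝ (Fin d))) = cst • volume := by
    haveI := hHaarInst
    exact ⟨_, Measure.isAddLeftInvariant_eq_smul _ _⟩
  have happ : ∀ B : Set (EuclideanSpace ℝ (Fin d)),
      μH[(d:ℕ)] B = (cst : ENNReal) * volume B := by
    intro B
    rw [hcst]
    simp [Measure.smul_apply]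
  have hz : zonotope v = ZProof.zSum Finset.univ v := by
    rw [ZProof.zSum_eq]
    rfl
  have hzOn : ∀ S : Finset (Fin n), zonotopeOn S v = ZProof.zSum S v := by
    intro S
    rw [ZProof.zSum_eq]
    rfl
  calc μH[(d:ℕ)] (zonotope v)
      = μH[(d:ℕ)] (ZProof.zSum Finset.univ w) := by rw [hz, hμ]
    _ = (cst : ENNReal) * volume (ZProof.zSum Finset.univ w) := happ _
    _ = (cst : ENNReal) * ∑ S ∈ Finset.univ.powersetCard d, volume (ZProof.zSum S w) := by
        rw [ZProof.core d Finset.univ w]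
    _ = ∑ S ∈ Finset.univ.powersetCard d, (cst : ENNReal) * volume (ZProof.zSum S w) := by
        rw [Finset.mul_sum]
    _ = ∑ S ∈ Finset.univ.powersetCard d, μH[(d:ℕ)] (ZProof.zSum S w) := by
        refine Finset.sum_congr rfl fun S _ => ?_
        rw [happ]
    _ = ∑ S ∈ Finset.univ.powersetCard d, μH[(d:ℕ)] (zonotopeOn S v) := by
        refine Finset.sum_congr rfl fun S _ => ?_
        rw [hzOn S, hμ S]
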